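/- There are no V-cycles: there is no x ∈ ℝ with x ≥ 1 and no l ∈ ℕ with l ≥ 1 such that V^l(x) = x. -/
import Mathlib


/-- The function `V x = x/2` if `⌊x⌋` is even, `3x/2` if `⌊x⌋` is odd. -/
noncomputable def V (x : ℝ) : ℝ := if Even ⌊x⌋ then x / 2 else 3 * x / 2

lemma V_iter_form (l : ℕ) (x : ℝ) : ∃ a : ℕ, V^[l] x = 3 ^ a * x / 2 ^ l := by
  induction l generalizing x with
  | zero => exact ⟨0, by simp⟩
  | succ n ih =>
    rw [Function.iterate_succ_apply]
    obtain ⟨a, ha⟩ := ih (V x)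
    by_cases h : Even ⌊x⌋
    · refine ⟨a, ?_⟩
      rw [ha]
      simp only [V, if_pos h]
      ring
    · refine ⟨a + 1, ?_⟩
      rw [ha]
      simp only [V, if_neg h]
      ring

/-- There are no `V`-cycles. -/
theorem no_V_cycles (x : ℝ) (hx : 1 ≤ x) (l : ℕ) (hl : 1 ≤ l) :
    V^[l] x ≠ x := by
  intro h
  obtain ⟨a, ha⟩ := V_iter_form l x
  rw [ha] at h
  have hx0 : x ≠ 0 := by linarith
  rw [div_eq_iff (by positivity : (2:ℝ) ^ l ≠ 0)] at h
  have h' : (3:ℝ) ^ a * x = 2 ^ l * x := by linarith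
  have h2 : (3 : ℝ) ^ a = 2 ^ l := mul_right_cancel₀ hx0 h'
  have h3 : (3 : ℕ) ^ a = 2 ^ l := by exact_mod_cast h2
  have hodd : Odd ((3 : ℕ) ^ a) := Odd.pow ⟨1, rfl⟩
  have heven : Even ((2 : ℕ) ^ l) := Nat.even_pow.mpr ⟨even_two, by omega⟩
  rw [h3] at hodd
  exact (Nat.not_odd_iff_even.mpr heven) hodd
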